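/- Order saturation of the conditional estimator: if P is shift-invariant on E^{k+1} and is n-th order Markov for some n ≤ k, meaning P(γ^{(m+1)}|γ^{(1:m)}) = P(γ^{(m+1)}|γ^{(m-n+1:m)}) for all m ≥ n, then the k-th order conditional estimator ∑_γ P(γ)·log(P(γ^{(k+1)}|γ^{(1:k)})/P(γ^{(1)}|γ^{(k+1:2)})) equals the n-th order conditional estimator computed from the (n+1)-marginal of P. -/

import Mathlib

open Finset

variable {E : Type*}

/-- Marginal of a distribution `P` on sequences of length `k+1` over the window
of `m` consecutive coordinates starting at position `j` (indices taken mod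
`k+1`; for `j + m ≤ k+1` this is the ordinary window marginal). -/
def window [Fintype E] [DecidableEq E] (k : ℕ) (P : (Fin (k + 1) → E) → ℝ)
    (j m : ℕ) : (Fin m → E) → ℝ :=
  fun δ => ∑ γ : Fin (k + 1) → E,
    if (∀ i : Fin m, γ ⟨(j + (i : ℕ)) % (k + 1), Nat.mod_lt _ (Nat.succ_pos k)⟩ = δ i)
      then P γ else 0

/-- Reversal of a finite sequence. -/
def seqRev (m : ℕ) (δ : Fin m → E) : Fin m → E := fun i => δ i.rev

/-- The first `m` coordinates of a sequence of length `m+1`. -/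
def seqInit (m : ℕ) (δ : Fin (m + 1) → E) : Fin m → E := fun i => δ i.castSucc

/-- The last `n+1` coordinates of a sequence of length `m+1` (for `n ≤ m`). -/
def seqLast (m n : ℕ) (h : n ≤ m) (δ : Fin (m + 1) → E) : Fin (n + 1) → E :=
  fun i => δ ⟨m - n + (i : ℕ), by have := i.isLt; omega⟩

section Aux
variable [Fintype E] [DecidableEq E]

lemma window_pos (k : ℕ) (P : (Fin (k + 1) → E) → ℝ) (hpos : ∀ γ, 0 < P γ)
    (e : E) (j m : ℕ) (hm : m ≤ k + 1) (δ : Fin m → E) :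
    0 < window k P j m δ := by
  classical
  set idx : Fin m → Fin (k + 1) :=
    fun i => ⟨(j + (i : ℕ)) % (k + 1), Nat.mod_lt _ (Nat.succ_pos k)⟩ with hidx
  have hinj : Function.Injective idx := by
    intro a b hab
    have h1 : (j + (a : ℕ)) % (k + 1) = (j + (b : ℕ)) % (k + 1) := congrArg Fin.val hab
    have h2 : (a : ℕ) % (k + 1) = (b : ℕ) % (k + 1) :=
      (Nat.ModEq.add_left_cancel' j h1)
    rw [Nat.mod_eq_of_lt (lt_of_lt_of_le a.isLt hm),
        Nat.mod_eq_of_lt (lt_of_lt_of_le b.isLt hm)] at h2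
    exact Fin.ext h2
  set γ0 : Fin (k + 1) → E := Function.extend idx δ (fun _ => e) with hγ0
  have hcond : ∀ i, γ0 (idx i) = δ i := fun i => hinj.extend_apply δ _ i
  have hle : P γ0 ≤ window k P j m δ := by
    unfold window
    have := Finset.single_le_sum (f := fun γ : Fin (k + 1) → E =>
        if (∀ i : Fin m, γ (idx i) = δ i) then P γ else 0)
      (fun γ _ => by split_ifs; exacts [(hpos _).le, le_rfl]) (Finset.mem_univ γ0)
    simpa [hcond] using this
  exact lt_of_lt_of_le (hpos γ0) hle

lemma window_full (k : ℕ) (P : (Fin (k + 1) → E) → ℝ) :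
    window k P 0 (k + 1) = P := by
  funext δ
  unfold window
  have hc : ∀ γ : Fin (k + 1) → E,
      (∀ i : Fin (k + 1), γ ⟨(0 + (i : ℕ)) % (k + 1), Nat.mod_lt _ (Nat.succ_pos k)⟩ = δ i)
        ↔ γ = δ := by
    intro γ
    constructor
    · intro h; funext i
      have := h i
      simpa [Fin.ext_iff, Nat.mod_eq_of_lt i.isLt] using this
    · intro h i; subst h
      congr 1
      exact Fin.ext (by simp [Nat.mod_eq_of_lt i.isLt])
  simp only [hc]
  simp

lemma window_group (k : ℕ) (P : (Fin (k + 1) → E) → ℝ) (j m : ℕ)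
    (f : (Fin (k + 1) → E) → Fin m → E)
    (hf : ∀ γ i, f γ i = γ ⟨(j + (i : ℕ)) % (k + 1), Nat.mod_lt _ (Nat.succ_pos k)⟩)
    (g : (Fin m → E) → ℝ) :
    ∑ δ : Fin m → E, window k P j m δ * g δ = ∑ γ : Fin (k + 1) → E, P γ * g (f γ) := by
  unfold window
  simp only [Finset.sum_mul, ite_mul, zero_mul]
  rw [Finset.sum_comm]
  refine Finset.sum_congr rfl fun γ _ => ?_
  have hc : ∀ δ : Fin m → E,
      (∀ i : Fin m, γ ⟨(j + (i : ℕ)) % (k + 1), Nat.mod_lt _ (Nat.succ_pos k)⟩ = δ i)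
        ↔ f γ = δ := by
    intro δ
    constructor
    · intro h; funext i; rw [hf]; exact h i
    · intro h i; rw [← h, hf]
  simp only [hc]
  rw [Finset.sum_ite_eq]
  simp

end Aux

/-- Order saturation of the conditional estimator: if the shift-invariant,
fully supported distribution `P` on `E^{k+1}` is n-th order Markov (n ≤ k),
the k-th order conditional estimator equals the n-th order conditional
estimator computed from the (n+1)-marginal of `P`. -/
theorem stmt_17 [Fintype E] [DecidableEq E] (k n : ℕ) (hn : 1 ≤ n) (hnk : n ≤ k)
    (P : (Fin (k + 1) → E) → ℝ)
    (hpos : ∀ γ, 0 < P γ) (hsum : ∑ γ, P γ = 1)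
    (hshift : ∀ j m : ℕ, j + m ≤ k + 1 → window k P j m = window k P 0 m)
    (hmarkov : ∀ m (hnm : n ≤ m), m ≤ k → ∀ δ : Fin (m + 1) → E,
      window k P 0 (m + 1) δ / window k P 0 m (seqInit m δ) =
        window k P 0 (n + 1) (seqLast m n hnm δ) /
          window k P 0 n (seqInit n (seqLast m n hnm δ))) :
    ∑ γ : Fin (k + 1) → E,
        P γ *
          Real.log
            ((P γ / window k P 0 k (seqInit k γ)) /
              (P (seqRev (k + 1) γ) / window k P 0 k (seqInit k (seqRev (k + 1) γ)))) =
      ∑ δ : Fin (n + 1) → E,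
        window k P 0 (n + 1) δ *
          Real.log
            ((window k P 0 (n + 1) δ / window k P 0 n (seqInit n δ)) /
              (window k P 0 (n + 1) (seqRev (n + 1) δ) /
                window k P 0 n (seqInit n (seqRev (n + 1) δ)))) := by
  classical
  have hE : Nonempty E := by
    by_contra h
    rw [not_nonempty_iff] at h
    have : (Finset.univ : Finset (Fin (k + 1) → E)) = ∅ := by simp
    rw [this] at hsum
    simp at hsum
  obtain ⟨e⟩ := hE
  have hW1 : ∀ δ : Fin (n + 1) → E, 0 < window k P 0 (n + 1) δ :=
    fun δ => window_pos k P hpos e 0 (n + 1) (by omega) δ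
  have hW0 : ∀ δ : Fin n → E, 0 < window k P 0 n δ :=
    fun δ => window_pos k P hpos e 0 n (by omega) δ
  set g : (Fin (n + 1) → E) → ℝ := fun δ =>
    window k P 0 (n + 1) δ / window k P 0 n (seqInit n δ) with hg
  have hgpos : ∀ δ, 0 < g δ := fun δ => div_pos (hW1 δ) (hW0 _)
  set fw : (Fin (k + 1) → E) → Fin (n + 1) → E :=
    fun γ i => γ (Fin.castLE (by omega : n + 1 ≤ k + 1) i) with hfw
  have hrevlast : ∀ γ : Fin (k + 1) → E,
      seqLast k n hnk (seqRev (k + 1) γ) = seqRev (n + 1) (fw γ) := by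
    intro γ
    funext i
    show γ (Fin.rev ⟨k - n + (i : ℕ), _⟩) = γ (Fin.castLE _ i.rev)
    congr 1
    ext
    simp only [Fin.val_rev, Fin.coe_castLE]
    have := i.isLt
    omega
  have hmk := hmarkov k hnk le_rfl
  have key : ∀ γ : Fin (k + 1) → E,
      (P γ / window k P 0 k (seqInit k γ)) /
        (P (seqRev (k + 1) γ) / window k P 0 k (seqInit k (seqRev (k + 1) γ)))
      = g (seqLast k n hnk γ) / g (seqRev (n + 1) (fw γ)) := by
    intro γ
    have h1 : P γ = window k P 0 (k + 1) γ := (congrFun (window_full k P) γ).symm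
    have h2 : P (seqRev (k + 1) γ) = window k P 0 (k + 1) (seqRev (k + 1) γ) :=
      (congrFun (window_full k P) (seqRev (k + 1) γ)).symm
    rw [h1, h2, hmk γ, hmk (seqRev (k + 1) γ), hrevlast γ, hg]
  have hf1 : ∀ (γ : Fin (k + 1) → E) (i : Fin (n + 1)),
      seqLast k n hnk γ i
        = γ ⟨(k - n + (i : ℕ)) % (k + 1), Nat.mod_lt _ (Nat.succ_pos k)⟩ := by
    intro γ i
    unfold seqLast
    congr 1
    ext
    simp only
    rw [Nat.mod_eq_of_lt (by have := i.isLt; omega)]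
  have hf2 : ∀ (γ : Fin (k + 1) → E) (i : Fin (n + 1)),
      fw γ i = γ ⟨(0 + (i : ℕ)) % (k + 1), Nat.mod_lt _ (Nat.succ_pos k)⟩ := by
    intro γ i
    show γ _ = γ _
    congr 1
    ext
    simp only [Fin.coe_castLE]
    rw [Nat.zero_add, Nat.mod_eq_of_lt (by have := i.isLt; omega)]
  have hA : ∑ δ : Fin (n + 1) → E, window k P (k - n) (n + 1) δ * Real.log (g δ)
      = ∑ γ : Fin (k + 1) → E, P γ * Real.log (g (seqLast k n hnk γ)) :=
    window_group k P (k - n) (n + 1) (seqLast k n hnk) hf1 (fun δ => Real.log (g δ))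
  have hB : ∑ δ : Fin (n + 1) → E,
        window k P 0 (n + 1) δ * Real.log (g (seqRev (n + 1) δ))
      = ∑ γ : Fin (k + 1) → E, P γ * Real.log (g (seqRev (n + 1) (fw γ))) :=
    window_group k P 0 (n + 1) fw hf2 (fun δ => Real.log (g (seqRev (n + 1) δ)))
  rw [hshift (k - n) (n + 1) (by omega)] at hA
  have lhs_eq : ∑ γ : Fin (k + 1) → E,
        P γ * Real.log
          ((P γ / window k P 0 k (seqInit k γ)) /
            (P (seqRev (k + 1) γ) / window k P 0 k (seqInit k (seqRev (k + 1) γ))))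
      = ∑ δ : Fin (n + 1) → E, window k P 0 (n + 1) δ * Real.log (g δ)
        - ∑ δ : Fin (n + 1) → E,
            window k P 0 (n + 1) δ * Real.log (g (seqRev (n + 1) δ)) := by
    rw [hA, hB, ← Finset.sum_sub_distrib]
    refine Finset.sum_congr rfl fun γ _ => ?_
    rw [key γ, Real.log_div (ne_of_gt (hgpos _)) (ne_of_gt (hgpos _)), mul_sub]
  rw [lhs_eq, ← Finset.sum_sub_distrib]
  refine Finset.sum_congr rfl fun δ _ => ?_
  have : (window k P 0 (n + 1) δ / window k P 0 n (seqInit n δ)) /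
      (window k P 0 (n + 1) (seqRev (n + 1) δ) /
        window k P 0 n (seqInit n (seqRev (n + 1) δ)))
      = g δ / g (seqRev (n + 1) δ) := by rw [hg]
  rw [this, Real.log_div (ne_of_gt (hgpos _)) (ne_of_gt (hgpos _)), mul_sub]
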